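/- Assume there is an open interval I ⊆ ℝ containing 0 such that for every α ∈ I, ∫ p q^α (1 + |log p| + |log q|)² dμ < ∞ (in particular Z_α ∈ (0,∞) for α ∈ I). Then the function α ↦ H(p_α) is differentiable on I and for every α ∈ I its derivative equals −α · Var_{p_α}[log q] − Cov_{p_α}[log p, log q]. -/

import Mathlib

open MeasureTheory Real Filter

lemma meas_rpow_aux {X : Type*} [MeasurableSpace X] {q : X → ℝ} (hq : Measurable q)
    (hq0 : ∀ x, 0 ≤ q x) (b : ℝ) : Measurable fun x => q x ^ b := by
  have h : (fun x => q x ^ b) = fun x =>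
      if q x = 0 then (0 : ℝ) ^ b else Real.exp (Real.log (q x) * b) := by
    funext x
    split_ifs with h
    · rw [h]
    · rw [Real.rpow_def_of_pos (lt_of_le_of_ne (hq0 x) (Ne.symm h))]
  rw [h]
  exact Measurable.ite (hq (measurableSet_singleton 0)) measurable_const
    (Real.measurable_exp.comp ((Real.measurable_log.comp hq).mul_const b))

lemma key_integrable {X : Type*} [MeasurableSpace X] (μ : Measure X)
    (p q g : X → ℝ) (hpmeas : Measurable p) (hp0 : ∀ x, 0 ≤ p x)
    (hqmeas : Measurable q) (hq0 : ∀ x, 0 ≤ q x) (hg : Measurable g)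
    (hgle : ∀ x, |g x| ≤ (1 + |Real.log (p x)| + |Real.log (q x)|) ^ 2) (β : ℝ)
    (hint : Integrable
      (fun x => p x * q x ^ β * (1 + |Real.log (p x)| + |Real.log (q x)|) ^ 2) μ) :
    Integrable (fun x => p x * q x ^ β * g x) μ := by
  refine hint.mono ((hpmeas.mul (meas_rpow_aux hqmeas hq0 β)).mul hg).aestronglyMeasurable ?_
  filter_upwards with x
  have h1 : 0 ≤ p x * q x ^ β := mul_nonneg (hp0 x) (Real.rpow_nonneg (hq0 x) β)
  have h2 : (0:ℝ) ≤ (1 + |Real.log (p x)| + |Real.log (q x)|) ^ 2 := sq_nonneg _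
  rw [Real.norm_eq_abs, Real.norm_eq_abs, abs_mul, abs_of_nonneg h1,
    abs_of_nonneg (mul_nonneg h1 h2)]
  exact mul_le_mul_of_nonneg_left (hgle x) h1

lemma key_deriv {X : Type*} [MeasurableSpace X] (μ : Measure X)
    (p q g : X → ℝ) (hpmeas : Measurable p) (hp0 : ∀ x, 0 ≤ p x)
    (hqmeas : Measurable q) (hq0 : ∀ x, 0 ≤ q x)
    (habs : ∀ᵐ x ∂μ, q x = 0 → p x = 0)
    (hg : Measurable g)
    (hgle : ∀ x, |g x| ≤ 1 + |Real.log (p x)| + |Real.log (q x)|)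
    (α δ : ℝ) (hδ : 0 < δ)
    (hint : ∀ β ∈ Set.Icc (α - δ) (α + δ), Integrable
      (fun x => p x * q x ^ β * (1 + |Real.log (p x)| + |Real.log (q x)|) ^ 2) μ) :
    HasDerivAt (fun β => ∫ x, p x * q x ^ β * g x ∂μ)
      (∫ x, p x * q x ^ α * (Real.log (q x) * g x) ∂μ) α := by
  set S : X → ℝ := fun x => 1 + |Real.log (p x)| + |Real.log (q x)| with hS
  have hS1 : ∀ x, 1 ≤ S x := by
    intro x
    have := abs_nonneg (Real.log (p x)); have := abs_nonneg (Real.log (q x))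
    simp only [hS]; linarith
  have hSnn : ∀ x, 0 ≤ S x := fun x => le_trans zero_le_one (hS1 x)
  have hgle2 : ∀ x, |g x| ≤ S x ^ 2 := by
    intro x
    have h : S x ≤ S x ^ 2 := by nlinarith [hS1 x]
    exact le_trans (hgle x) h
  have hmeasF : ∀ β : ℝ, AEStronglyMeasurable (fun x => p x * q x ^ β * g x) μ :=
    fun β => ((hpmeas.mul (meas_rpow_aux hqmeas hq0 β)).mul hg).aestronglyMeasurable
  have hαI : α ∈ Set.Icc (α - δ) (α + δ) := ⟨by linarith, by linarith⟩
  have key := hasDerivAt_integral_of_dominated_loc_of_deriv_le (μ := μ)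
    (F := fun β x => p x * q x ^ β * g x)
    (F' := fun β x => p x * q x ^ β * (Real.log (q x) * g x))
    (x₀ := α)
    (bound := fun x => p x * (q x ^ (α - δ) + q x ^ (α + δ)) * S x ^ 2)
    (Metric.ball_mem_nhds α hδ) (Eventually.of_forall hmeasF)
    (key_integrable μ p q g hpmeas hp0 hqmeas hq0 hg hgle2 α (hint α hαI))
    (((hpmeas.mul (meas_rpow_aux hqmeas hq0 α)).mul
      ((Real.measurable_log.comp hqmeas).mul hg)).aestronglyMeasurable)
    ?_ ?_ ?_
  · exact key.2
  · -- bound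
    filter_upwards [habs] with x hx
    intro β hβ
    rw [Metric.mem_ball, Real.dist_eq, abs_sub_lt_iff] at hβ
    by_cases hq : q x = 0
    · simp [hx hq]
    · have hqpos : 0 < q x := lt_of_le_of_ne (hq0 x) (Ne.symm hq)
      have hqb : q x ^ β ≤ q x ^ (α - δ) + q x ^ (α + δ) := by
        rcases le_total 1 (q x) with h1 | h1
        · exact (Real.rpow_le_rpow_of_exponent_le h1 (by linarith)).trans
            (le_add_of_nonneg_left (Real.rpow_nonneg (hq0 x) _))
        · exact (Real.rpow_le_rpow_of_exponent_ge hqpos h1 (by linarith)).trans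
            (le_add_of_nonneg_right (Real.rpow_nonneg (hq0 x) _))
      have hlq : |Real.log (q x)| ≤ S x := by
        have := abs_nonneg (Real.log (p x)); simp only [hS]; linarith
      have hlg : |Real.log (q x) * g x| ≤ S x ^ 2 := by
        rw [abs_mul, sq]
        exact mul_le_mul hlq (hgle x) (abs_nonneg _) (hSnn x)
      have h1 : 0 ≤ p x * q x ^ β := mul_nonneg (hp0 x) (Real.rpow_nonneg (hq0 x) β)
      rw [Real.norm_eq_abs, abs_mul, abs_of_nonneg h1]
      exact mul_le_mul (mul_le_mul_of_nonneg_left hqb (hp0 x)) hlg (abs_nonneg _)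
        (mul_nonneg (hp0 x) (by positivity))
  · -- bound integrable
    have h : (fun x => p x * (q x ^ (α - δ) + q x ^ (α + δ)) * S x ^ 2)
        = fun x => p x * q x ^ (α - δ) * S x ^ 2 + p x * q x ^ (α + δ) * S x ^ 2 := by
      funext x; ring
    rw [h]
    exact (hint (α - δ) ⟨le_refl _, by linarith⟩).add (hint (α + δ) ⟨by linarith, le_refl _⟩)
  · -- differentiability
    filter_upwards [habs] with x hx
    intro β _
    by_cases hq : q x = 0
    · simp only [hx hq, zero_mul]
      exact hasDerivAt_const β 0
    · have hqpos : 0 < q x := lt_of_le_of_ne (hq0 x) (Ne.symm hq)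
      have h1 : HasDerivAt (fun β : ℝ => Real.log (q x) * β) (Real.log (q x)) β := by
        simpa using (hasDerivAt_id β).const_mul (Real.log (q x))
      have h2 := h1.exp
      have h3 : HasDerivAt (fun β : ℝ => q x ^ β) (q x ^ β * Real.log (q x)) β := by
        have hfun : (fun β : ℝ => q x ^ β) = fun β => Real.exp (Real.log (q x) * β) := by
          funext y; rw [Real.rpow_def_of_pos hqpos]
        rw [hfun, Real.rpow_def_of_pos hqpos]
        exact h2
      have h4 := (h3.const_mul (p x)).mul_const (g x)
      convert h4 using 1
      · rfl
      ring
/-- The entropy of the tilted density `p_α = p q^α / Z_α` is differentiable on `I`, with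
derivative `−α·Var_{p_α}[log q] − Cov_{p_α}[log p, log q]` at each `α ∈ I`. -/
theorem skewed_entropy_deriv
    {X : Type*} [MeasurableSpace X] (μ : Measure X) [SigmaFinite μ]
    (p q : X → ℝ)
    (hpmeas : Measurable p) (hp0 : ∀ x, 0 ≤ p x) (hp1 : ∫ x, p x ∂μ = 1)
    (hqmeas : Measurable q) (hq0 : ∀ x, 0 ≤ q x) (hq1 : ∫ x, q x ∂μ = 1)
    (habs : ∀ᵐ x ∂μ, q x = 0 → p x = 0)
    (Z : ℝ → ℝ) (hZ : Z = fun α => ∫ x, p x * q x ^ α ∂μ)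
    (pα : ℝ → X → ℝ) (hpα : pα = fun α x => p x * q x ^ α / Z α)
    (I : Set ℝ) (hIopen : IsOpen I) (hI0 : (0 : ℝ) ∈ I)
    (hint : ∀ α ∈ I, Integrable
      (fun x => p x * q x ^ α * (1 + |Real.log (p x)| + |Real.log (q x)|) ^ 2) μ)
    (hZpos : ∀ α ∈ I, 0 < Z α)
    (H : (X → ℝ) → ℝ)
    (hH : H = fun r => -∫ x, r x * Real.log (r x) ∂μ) :
    ∀ α ∈ I, HasDerivAt (fun β => H (pα β))
      (-α * ((∫ x, pα α x * Real.log (q x) ^ 2 ∂μ) -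
          (∫ x, pα α x * Real.log (q x) ∂μ) ^ 2)
        - ((∫ x, pα α x * (Real.log (p x) * Real.log (q x)) ∂μ) -
          (∫ x, pα α x * Real.log (p x) ∂μ) * (∫ x, pα α x * Real.log (q x) ∂μ))) α := by
  intro α hα
  obtain ⟨ε, hε, hball⟩ := Metric.isOpen_iff.1 hIopen α hα
  set δ := ε / 2 with hδdef
  have hδ : 0 < δ := by positivity
  have hIcc : Set.Icc (α - δ) (α + δ) ⊆ I := by
    intro β hβ
    apply hball
    rw [Metric.mem_ball, Real.dist_eq]
    have h1 := hβ.1; have h2 := hβ.2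
    rw [abs_sub_lt_iff]; constructor <;> [skip; skip] <;> simp only [hδdef] at h1 h2 ⊢ <;> linarith
  have hintIcc : ∀ β ∈ Set.Icc (α - δ) (α + δ), Integrable
      (fun x => p x * q x ^ β * (1 + |Real.log (p x)| + |Real.log (q x)|) ^ 2) μ :=
    fun β hβ => hint β (hIcc hβ)
  -- pointwise bounds
  have hb1 : ∀ x : X, |(1:ℝ)| ≤ 1 + |Real.log (p x)| + |Real.log (q x)| := by
    intro x; have := abs_nonneg (Real.log (p x)); have := abs_nonneg (Real.log (q x))
    rw [abs_one]; linarith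
  have hbp : ∀ x : X, |Real.log (p x)| ≤ 1 + |Real.log (p x)| + |Real.log (q x)| := by
    intro x; have := abs_nonneg (Real.log (q x)); linarith
  have hbq : ∀ x : X, |Real.log (q x)| ≤ 1 + |Real.log (p x)| + |Real.log (q x)| := by
    intro x; have := abs_nonneg (Real.log (p x)); linarith
  have hsq : ∀ a b : ℝ, ∀ x : X, |a| ≤ 1 + |Real.log (p x)| + |Real.log (q x)| →
      |b| ≤ 1 + |Real.log (p x)| + |Real.log (q x)| →
      |a * b| ≤ (1 + |Real.log (p x)| + |Real.log (q x)|) ^ 2 := by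
    intro a b x ha hb
    rw [abs_mul, sq]
    exact mul_le_mul ha hb (abs_nonneg _) (le_trans (abs_nonneg a) ha)
  have honesq : ∀ g : X → ℝ, (∀ x, |g x| ≤ 1 + |Real.log (p x)| + |Real.log (q x)|) →
      ∀ x, |g x| ≤ (1 + |Real.log (p x)| + |Real.log (q x)|) ^ 2 := by
    intro g hg x
    have := hsq (g x) 1 x (hg x) (hb1 x)
    simpa using this
  -- derivatives of the three basic integrals
  have hZd : HasDerivAt (fun β => ∫ x, p x * q x ^ β ∂μ)
      (∫ x, p x * q x ^ α * Real.log (q x) ∂μ) α := by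
    have := key_deriv μ p q (fun _ => 1) hpmeas hp0 hqmeas hq0 habs measurable_const hb1
      α δ hδ hintIcc
    simpa only [mul_one] using this
  have hAd : HasDerivAt (fun β => ∫ x, p x * q x ^ β * Real.log (p x) ∂μ)
      (∫ x, p x * q x ^ α * (Real.log (q x) * Real.log (p x)) ∂μ) α :=
    key_deriv μ p q (fun x => Real.log (p x)) hpmeas hp0 hqmeas hq0 habs
      (Real.measurable_log.comp hpmeas) hbp α δ hδ hintIcc
  have hBd : HasDerivAt (fun β => ∫ x, p x * q x ^ β * Real.log (q x) ∂μ)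
      (∫ x, p x * q x ^ α * (Real.log (q x) * Real.log (q x)) ∂μ) α :=
    key_deriv μ p q (fun x => Real.log (q x)) hpmeas hp0 hqmeas hq0 habs
      (Real.measurable_log.comp hqmeas) hbq α δ hδ hintIcc
  -- integrability for every β ∈ I
  have hZint : ∀ β ∈ I, Integrable (fun x => p x * q x ^ β) μ := by
    intro β hβ
    have := key_integrable μ p q (fun _ => 1) hpmeas hp0 hqmeas hq0 measurable_const
      (honesq _ hb1) β (hint β hβ)
    simpa only [mul_one] using this
  have hAint : ∀ β ∈ I, Integrable (fun x => p x * q x ^ β * Real.log (p x)) μ :=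
    fun β hβ => key_integrable μ p q _ hpmeas hp0 hqmeas hq0
      (Real.measurable_log.comp hpmeas) (honesq _ hbp) β (hint β hβ)
  have hBint : ∀ β ∈ I, Integrable (fun x => p x * q x ^ β * Real.log (q x)) μ :=
    fun β hβ => key_integrable μ p q _ hpmeas hp0 hqmeas hq0
      (Real.measurable_log.comp hqmeas) (honesq _ hbq) β (hint β hβ)
  have hZpos' : ∀ β ∈ I, 0 < ∫ x, p x * q x ^ β ∂μ := by
    intro β hβ; have := hZpos β hβ; rwa [hZ] at this
  -- rewriting the entropy
  have hHrw : ∀ β ∈ I, H (pα β) = Real.log (∫ x, p x * q x ^ β ∂μ)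
      - ((∫ x, p x * q x ^ β * Real.log (p x) ∂μ)
          + β * ∫ x, p x * q x ^ β * Real.log (q x) ∂μ) / (∫ x, p x * q x ^ β ∂μ) := by
    intro β hβ
    have hZb := hZpos' β hβ
    have hZbne : (∫ x, p x * q x ^ β ∂μ) ≠ 0 := ne_of_gt hZb
    have hae : (fun x => pα β x * Real.log (pα β x)) =ᵐ[μ]
        (fun x => (p x * q x ^ β * Real.log (p x)
          + β * (p x * q x ^ β * Real.log (q x))
          - Real.log (∫ y, p y * q y ^ β ∂μ) * (p x * q x ^ β))
            / (∫ y, p y * q y ^ β ∂μ)) := by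
      filter_upwards [habs] with x hx
      simp only [hpα, hZ]
      by_cases hp : p x = 0
      · simp [hp]
      · have hppos : 0 < p x := lt_of_le_of_ne (hp0 x) (Ne.symm hp)
        have hqpos : 0 < q x := by
          rcases lt_or_eq_of_le (hq0 x) with h | h
          · exact h
          · exact absurd (hx h.symm) hp
        have hqb : 0 < q x ^ β := Real.rpow_pos_of_pos hqpos β
        rw [Real.log_div (by positivity) hZbne,
          Real.log_mul (ne_of_gt hppos) (ne_of_gt hqb), Real.log_rpow hqpos]
        field_simp
    have hiA : Integrable (fun x => p x * q x ^ β * Real.log (p x)) μ := hAint β hβ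
    have hiB : Integrable (fun x => β * (p x * q x ^ β * Real.log (q x))) μ :=
      (hBint β hβ).const_mul β
    have hiAB : Integrable (fun x => p x * q x ^ β * Real.log (p x)
        + β * (p x * q x ^ β * Real.log (q x))) μ := hiA.add hiB
    have hiZ : Integrable (fun x =>
        Real.log (∫ y, p y * q y ^ β ∂μ) * (p x * q x ^ β)) μ :=
      (hZint β hβ).const_mul _
    rw [hH]
    simp only
    rw [integral_congr_ae hae, integral_div, integral_sub hiAB hiZ,
      integral_add hiA hiB, integral_const_mul, integral_const_mul]
    field_simp
    ring
  -- assemble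
  have hZane : (∫ x, p x * q x ^ α ∂μ) ≠ 0 := ne_of_gt (hZpos' α hα)
  have hmain := ((hZd.log hZane).sub
    ((hAd.add ((hasDerivAt_id α).mul hBd)).div hZd hZane))
  have heq : (fun β => H (pα β)) =ᶠ[nhds α]
      (fun β => Real.log (∫ x, p x * q x ^ β ∂μ)
      - ((∫ x, p x * q x ^ β * Real.log (p x) ∂μ)
          + β * ∫ x, p x * q x ^ β * Real.log (q x) ∂μ) / (∫ x, p x * q x ^ β ∂μ)) := by
    filter_upwards [hIopen.mem_nhds hα] with β hβ
    exact hHrw β hβ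
  have hfinal := hmain.congr_of_eventuallyEq heq
  convert hfinal using 1
  · rfl
  · rfl
  -- identify the derivative value
  simp only [hpα, hZ]
  have e2 : ∀ f : X → ℝ, (∫ x, p x * q x ^ α / (∫ y, p y * q y ^ α ∂μ) * f x ∂μ)
      = (∫ x, p x * q x ^ α * f x ∂μ) / (∫ y, p y * q y ^ α ∂μ) := by
    intro f
    rw [← integral_div]
    congr 1; funext x; ring
  rw [e2 (fun x => Real.log (q x) ^ 2), e2 (fun x => Real.log (q x)),
    e2 (fun x => Real.log (p x) * Real.log (q x)), e2 (fun x => Real.log (p x))]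
  have e3 : (∫ x, p x * q x ^ α * Real.log (q x) ^ 2 ∂μ)
      = ∫ x, p x * q x ^ α * (Real.log (q x) * Real.log (q x)) ∂μ := by
    congr 1; funext x; ring
  have e4 : (∫ x, p x * q x ^ α * (Real.log (p x) * Real.log (q x)) ∂μ)
      = ∫ x, p x * q x ^ α * (Real.log (q x) * Real.log (p x)) ∂μ := by
    congr 1; funext x; ring
  rw [e3, e4]
  simp only [Pi.add_apply, Pi.mul_apply, id]
  field_simp
  ring
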